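/- For the soft-thresholding pivot summand: let ε ~ N(0,1), ν ∈ ℝ, τ > 0, a = ν − τ, b = ν + τ, I = 1{a < ε < b}, I⁺ = 1{ε > b}, I⁻ = 1{ε < a}, and Z = (ε² − 1)(1 − 2I) + 2νεI − 2τε(I⁺ − I⁻). Then E[Z] = 0 and E[Z²] = 2[1 + 2τ² + 2ab(Φ(b) − Φ(a)) + 2aφ(b) − 2bφ(a)]. -/

import Mathlib

open MeasureTheory ProbabilityTheory Real Filter Set

noncomputable def gaussPdf (x : ℝ) : ℝ := (Real.sqrt (2 * Real.pi))⁻¹ * Real.exp (-x ^ 2 / 2)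

lemma gaussPdf_nonneg (x : ℝ) : 0 ≤ gaussPdf x := by
  unfold gaussPdf; positivity

lemma gaussPdf_eq (x : ℝ) : gaussianPDFReal 0 1 x = gaussPdf x := by
  simp only [gaussianPDFReal, gaussPdf, NNReal.coe_one, mul_one, sub_zero, one_div]

lemma gaussPdf_neg (x : ℝ) : gaussPdf (-x) = gaussPdf x := by
  unfold gaussPdf; rw [neg_pow]; norm_num

lemma integrable_gaussPdf : Integrable gaussPdf := by
  have := integrable_gaussianPDFReal 0 1
  exact this.congr (Filter.Eventually.of_forall gaussPdf_eq)

lemma integral_gaussPdf : ∫ x, gaussPdf x = 1 := by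
  rw [← integral_gaussianPDFReal_eq_one 0 (one_ne_zero)]
  exact integral_congr_ae (Filter.Eventually.of_forall fun x => (gaussPdf_eq x).symm)

lemma hasDerivAt_gaussPdf (x : ℝ) : HasDerivAt gaussPdf (-x * gaussPdf x) x := by
  have h1 : HasDerivAt (fun y : ℝ => -y^2/2) (-x) x := by
    have := ((hasDerivAt_pow 2 x).neg.div_const 2)
    convert this using 1
    · rfl
    · rfl
    simp; ring
  have h2 := (h1.exp).const_mul (Real.sqrt (2 * Real.pi))⁻¹
  show HasDerivAt (fun y => (Real.sqrt (2 * Real.pi))⁻¹ * Real.exp (-y^2/2)) _ x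
  convert h2 using 1
  · rfl
  · rfl
  unfold gaussPdf; ring

lemma integrable_pow_gauss (n : ℕ) : Integrable (fun x : ℝ => x ^ n * gaussPdf x) := by
  have hn : (-1 : ℝ) < (n : ℝ) := lt_of_lt_of_le (by norm_num) (Nat.cast_nonneg n)
  have h : Integrable fun x : ℝ => x ^ (n : ℝ) * Real.exp (-(1/2 : ℝ) * x ^ 2) :=
    integrable_rpow_mul_exp_neg_mul_sq (by norm_num) hn
  have h2 := h.const_mul (Real.sqrt (2 * Real.pi))⁻¹
  refine h2.congr (Filter.Eventually.of_forall fun x => ?_)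
  unfold gaussPdf
  simp only [Real.rpow_natCast, show ∀ y : ℝ, -(1/2:ℝ)*y^2 = -y^2/2 from fun y => by ring]
  ring

lemma tendsto_pow_gauss_atTop (n : ℕ) :
    Tendsto (fun x : ℝ => x ^ n * gaussPdf x) atTop (nhds 0) := by
  have ho := rpow_mul_exp_neg_mul_sq_isLittleO_exp_neg (b := 1/2) (by norm_num) (n : ℝ)
  have h0 : Tendsto (fun x : ℝ => Real.exp (-(1/2:ℝ) * x)) atTop (nhds 0) := by
    have := Real.tendsto_exp_neg_atTop_nhds_zero.comp
      (tendsto_id.const_mul_atTop (by norm_num : (0:ℝ) < 1/2))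
    simpa [Function.comp_def, neg_mul] using this
  have h1 : Tendsto (fun x : ℝ => x ^ (n:ℝ) * Real.exp (-(1/2:ℝ) * x ^ 2)) atTop (nhds 0) :=
    ho.isBigO.trans_tendsto h0
  have h2 := h1.const_mul (Real.sqrt (2 * Real.pi))⁻¹
  rw [mul_zero] at h2
  refine h2.congr fun x => ?_
  unfold gaussPdf
  simp only [Real.rpow_natCast, show ∀ y : ℝ, -(1/2:ℝ)*y^2 = -y^2/2 from fun y => by ring]
  ring

lemma tendsto_pow_gauss_atBot (n : ℕ) :
    Tendsto (fun x : ℝ => x ^ n * gaussPdf x) atBot (nhds 0) := by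
  have h := (tendsto_pow_gauss_atTop n).comp tendsto_neg_atBot_atTop
  have h2 := h.const_mul ((-1 : ℝ) ^ n)
  rw [mul_zero] at h2
  refine h2.congr fun x => ?_
  show (-1:ℝ)^n * ((-x)^n * gaussPdf (-x)) = x^n * gaussPdf x
  rw [gaussPdf_neg, ← mul_assoc, ← mul_pow, neg_mul_neg, one_mul]

noncomputable def gaussCdf (x : ℝ) : ℝ := ∫ t in Set.Iic x, gaussPdf t

def cub (c3 c2 c1 c0 x : ℝ) : ℝ := c3*x^3 + c2*x^2 + c1*x + c0

def quart (c3 c2 c1 c0 c x : ℝ) : ℝ :=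
  c + (3*c3*x^2 + 2*c2*x + c1) - x * cub c3 c2 c1 c0 x

lemma hasDerivAt_cub_gauss (c3 c2 c1 c0 x : ℝ) :
    HasDerivAt (fun y => cub c3 c2 c1 c0 y * gaussPdf y)
      (quart c3 c2 c1 c0 0 x * gaussPdf x) x := by
  have hq : HasDerivAt (fun y => cub c3 c2 c1 c0 y) (3*c3*x^2 + 2*c2*x + c1) x := by
    have h := (((hasDerivAt_pow 3 x).const_mul c3).add
      (((hasDerivAt_pow 2 x).const_mul c2).add
        (((hasDerivAt_id x).const_mul c1).add (hasDerivAt_const x c0))))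
    convert h using 1
    · rfl
    · rfl
    · funext y; unfold cub; simp only [id, Pi.add_apply]; ring
    · simp; ring
  have := hq.mul (hasDerivAt_gaussPdf x)
  convert this using 1
  · rfl
  · rfl
  · rfl
  unfold quart; ring

lemma integrable_p4 (a0 a1 a2 a3 a4 : ℝ) :
    Integrable (fun x : ℝ => (a4*x^4 + a3*x^3 + a2*x^2 + a1*x + a0) * gaussPdf x) := by
  have h := ((((integrable_pow_gauss 4).const_mul a4).add
    ((integrable_pow_gauss 3).const_mul a3)).add
    (((integrable_pow_gauss 2).const_mul a2).add
      (((integrable_pow_gauss 1).const_mul a1).add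
        ((integrable_pow_gauss 0).const_mul a0))))
  refine h.congr (Filter.Eventually.of_forall fun x => ?_)
  simp only [Pi.add_apply, pow_one, pow_zero]
  ring

lemma quart_eq_p4 (c3 c2 c1 c0 c : ℝ) :
    (fun x => quart c3 c2 c1 c0 c x * gaussPdf x)
      = fun x => ((-c3)*x^4 + (-c2)*x^3 + (3*c3 - c1)*x^2 + (2*c2 - c0)*x + (c + c1))
          * gaussPdf x := by
  funext x; unfold quart cub; ring

lemma integrable_quart (c3 c2 c1 c0 c : ℝ) :
    Integrable (fun x : ℝ => quart c3 c2 c1 c0 c x * gaussPdf x) := by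
  rw [quart_eq_p4]; exact integrable_p4 _ _ _ _ _

lemma tendsto_cub_gauss_atBot (c3 c2 c1 c0 : ℝ) :
    Tendsto (fun x : ℝ => cub c3 c2 c1 c0 x * gaussPdf x) atBot (nhds 0) := by
  have h := (((tendsto_pow_gauss_atBot 3).const_mul c3).add
    (((tendsto_pow_gauss_atBot 2).const_mul c2).add
      (((tendsto_pow_gauss_atBot 1).const_mul c1).add
        ((tendsto_pow_gauss_atBot 0).const_mul c0))))
  simp only [mul_zero, add_zero] at h
  refine h.congr fun x => ?_
  unfold cub; simp only [pow_one, pow_zero]; ring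

lemma tendsto_cub_gauss_atTop (c3 c2 c1 c0 : ℝ) :
    Tendsto (fun x : ℝ => cub c3 c2 c1 c0 x * gaussPdf x) atTop (nhds 0) := by
  have h := (((tendsto_pow_gauss_atTop 3).const_mul c3).add
    (((tendsto_pow_gauss_atTop 2).const_mul c2).add
      (((tendsto_pow_gauss_atTop 1).const_mul c1).add
        ((tendsto_pow_gauss_atTop 0).const_mul c0))))
  simp only [mul_zero, add_zero] at h
  refine h.congr fun x => ?_
  unfold cub; simp only [pow_one, pow_zero]; ring

lemma quart_split (c3 c2 c1 c0 c : ℝ) :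
    (fun x => quart c3 c2 c1 c0 c x * gaussPdf x)
      = fun x => c * gaussPdf x + quart c3 c2 c1 c0 0 x * gaussPdf x := by
  funext x; unfold quart; ring

lemma key_Iic (c3 c2 c1 c0 c t : ℝ) :
    ∫ x in Set.Iic t, quart c3 c2 c1 c0 c x * gaussPdf x
      = c * gaussCdf t + cub c3 c2 c1 c0 t * gaussPdf t := by
  rw [show (fun x => quart c3 c2 c1 c0 c x * gaussPdf x) = _ from quart_split c3 c2 c1 c0 c]
  rw [integral_add ((integrable_gaussPdf.const_mul c).integrableOn)
    ((integrable_quart c3 c2 c1 c0 0).integrableOn)]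
  rw [integral_const_mul]
  have hftc := integral_Iic_of_hasDerivAt_of_tendsto' (a := t)
    (f := fun y => cub c3 c2 c1 c0 y * gaussPdf y)
    (f' := fun x => quart c3 c2 c1 c0 0 x * gaussPdf x)
    (fun x _ => hasDerivAt_cub_gauss c3 c2 c1 c0 x)
    ((integrable_quart c3 c2 c1 c0 0).integrableOn)
    (tendsto_cub_gauss_atBot c3 c2 c1 c0)
  rw [hftc, gaussCdf]; ring

lemma key_Ioi (c3 c2 c1 c0 c t : ℝ) :
    ∫ x in Set.Ioi t, quart c3 c2 c1 c0 c x * gaussPdf x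
      = c * (1 - gaussCdf t) - cub c3 c2 c1 c0 t * gaussPdf t := by
  have hIic := key_Iic c3 c2 c1 c0 c t
  have hsum := intervalIntegral.integral_Iic_add_Ioi (μ := volume) (b := t)
    ((integrable_quart c3 c2 c1 c0 c).integrableOn)
    ((integrable_quart c3 c2 c1 c0 c).integrableOn)
  have htot : ∫ x, quart c3 c2 c1 c0 c x * gaussPdf x = c := by
    rw [show (fun x => quart c3 c2 c1 c0 c x * gaussPdf x) = _ from quart_split c3 c2 c1 c0 c]
    rw [integral_add (integrable_gaussPdf.const_mul c) (integrable_quart c3 c2 c1 c0 0)]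
    rw [integral_const_mul, integral_gaussPdf]
    have h2 := intervalIntegral.integral_Iic_add_Ioi (μ := volume) (b := 0)
      ((integrable_quart c3 c2 c1 c0 0).integrableOn)
      ((integrable_quart c3 c2 c1 c0 0).integrableOn)
    have ha := key_Iic c3 c2 c1 c0 0 0
    have hb : ∫ x in Set.Ioi (0:ℝ), quart c3 c2 c1 c0 0 x * gaussPdf x
        = - (cub c3 c2 c1 c0 0 * gaussPdf 0) := by
      have hftc := integral_Ioi_of_hasDerivAt_of_tendsto' (a := (0:ℝ))
        (f := fun y => cub c3 c2 c1 c0 y * gaussPdf y)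
        (f' := fun x => quart c3 c2 c1 c0 0 x * gaussPdf x)
        (fun x _ => hasDerivAt_cub_gauss c3 c2 c1 c0 x)
        ((integrable_quart c3 c2 c1 c0 0).integrableOn)
        (tendsto_cub_gauss_atTop c3 c2 c1 c0)
      rw [hftc]; ring
    rw [← h2, ha, hb]; ring
  rw [htot, hIic] at hsum
  linarith

lemma key_Ioo (c3 c2 c1 c0 c s t : ℝ) (hst : s ≤ t) :
    ∫ x in Set.Ioo s t, quart c3 c2 c1 c0 c x * gaussPdf x
      = c * (gaussCdf t - gaussCdf s)
        + cub c3 c2 c1 c0 t * gaussPdf t - cub c3 c2 c1 c0 s * gaussPdf s := by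
  rw [← integral_Ioc_eq_integral_Ioo]
  have hsplit : Set.Iic s ∪ Set.Ioc s t = Set.Iic t := Set.Iic_union_Ioc_eq_Iic hst
  have hu := setIntegral_union (f := fun x => quart c3 c2 c1 c0 c x * gaussPdf x)
    (μ := volume) (s := Set.Iic s) (t := Set.Ioc s t)
    (Set.Iic_disjoint_Ioc le_rfl) measurableSet_Ioc
    ((integrable_quart c3 c2 c1 c0 c).integrableOn)
    ((integrable_quart c3 c2 c1 c0 c).integrableOn)
  rw [hsplit] at hu
  rw [key_Iic, key_Iic] at hu
  linarith

lemma continuous_gaussPdf : Continuous gaussPdf := by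
  unfold gaussPdf; fun_prop

lemma integral_gaussianReal_eq (f : ℝ → ℝ) :
    ∫ x, f x ∂(gaussianReal 0 1) = ∫ x, f x * gaussPdf x := by
  rw [gaussianReal_of_var_ne_zero 0 one_ne_zero]
  rw [show gaussianPDF 0 1 = (fun x => ((Real.toNNReal (gaussianPDFReal 0 1 x) : NNReal) : ENNReal)) from rfl]
  rw [integral_withDensity_eq_integral_smul ((measurable_gaussianPDFReal 0 1).real_toNNReal) f]
  congr 1
  funext x
  rw [NNReal.smul_def, Real.coe_toNNReal _ (gaussianPDFReal_nonneg 0 1 x), gaussPdf_eq,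
    smul_eq_mul, mul_comm]

lemma two_mul_abs_le (c x : ℝ) : |2*c*x| ≤ |c| * (x ^ 2 + 1) := by
  rw [abs_mul, abs_mul, abs_two]
  have h1 := abs_mul_abs_self x
  have h2 := sq_nonneg (|x| - 1)
  have h3 := abs_nonneg c
  have h4 := abs_nonneg x
  nlinarith [mul_nonneg h3 h2, sq_abs x]

set_option maxHeartbeats 1000000 in
theorem stmt14 (ν τ : ℝ) (hτ : 0 < τ) :
    let a : ℝ := ν - τ
    let b : ℝ := ν + τ
    let Z : ℝ → ℝ := fun ε =>
      (ε ^ 2 - 1) * (1 - 2 * (if a < ε ∧ ε < b then (1 : ℝ) else 0))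
        + 2 * ν * ε * (if a < ε ∧ ε < b then (1 : ℝ) else 0)
        - 2 * τ * ε * ((if b < ε then (1 : ℝ) else 0) - (if ε < a then (1 : ℝ) else 0))
    (∫ ε, Z ε ∂(gaussianReal 0 1)) = 0
    ∧ (∫ ε, Z ε ^ 2 ∂(gaussianReal 0 1))
        = 2 * (1 + 2 * τ ^ 2 + 2 * a * b * (gaussCdf b - gaussCdf a)
            + 2 * a * gaussPdf b - 2 * b * gaussPdf a) := by
  intro a b Z
  have ha : a = ν - τ := rfl
  have hb : b = ν + τ := rfl
  have hab : a < b := by rw [ha, hb]; linarith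
  -- measurability of Z
  have hI : Measurable fun x : ℝ => (if a < x ∧ x < b then (1:ℝ) else 0) := by
    have he : (fun x : ℝ => (if a < x ∧ x < b then (1:ℝ) else 0))
        = (Set.Ioo a b).indicator (fun _ => 1) := by
      funext x; by_cases h : a < x ∧ x < b
      · rw [if_pos h, Set.indicator_of_mem (Set.mem_Ioo.mpr h)]
      · rw [if_neg h, Set.indicator_of_notMem (fun hm => h (Set.mem_Ioo.mp hm))]
    rw [he]; exact measurable_const.indicator measurableSet_Ioo
  have hIp : Measurable fun x : ℝ => (if b < x then (1:ℝ) else 0) := by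
    have he : (fun x : ℝ => (if b < x then (1:ℝ) else 0))
        = (Set.Ioi b).indicator (fun _ => 1) := by
      funext x; by_cases h : b < x
      · rw [if_pos h, Set.indicator_of_mem (Set.mem_Ioi.mpr h)]
      · rw [if_neg h, Set.indicator_of_notMem (fun hm => h (Set.mem_Ioi.mp hm))]
    rw [he]; exact measurable_const.indicator measurableSet_Ioi
  have hIm : Measurable fun x : ℝ => (if x < a then (1:ℝ) else 0) := by
    have he : (fun x : ℝ => (if x < a then (1:ℝ) else 0))
        = (Set.Iio a).indicator (fun _ => 1) := by
      funext x; by_cases h : x < a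
      · rw [if_pos h, Set.indicator_of_mem (Set.mem_Iio.mpr h)]
      · rw [if_neg h, Set.indicator_of_notMem (fun hm => h (Set.mem_Iio.mp hm))]
    rw [he]; exact measurable_const.indicator measurableSet_Iio
  have hmZ : Measurable Z := by
    show Measurable fun ε : ℝ =>
      (ε ^ 2 - 1) * (1 - 2 * (if a < ε ∧ ε < b then (1 : ℝ) else 0))
        + 2 * ν * ε * (if a < ε ∧ ε < b then (1 : ℝ) else 0)
        - 2 * τ * ε * ((if b < ε then (1 : ℝ) else 0) - (if ε < a then (1 : ℝ) else 0))
    exact ((((measurable_id.pow_const 2).sub_const 1).mul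
      (measurable_const.sub (hI.const_mul 2))).add
      ((measurable_id.const_mul (2*ν)).mul hI)).sub
      ((measurable_id.const_mul (2*τ)).mul (hIp.sub hIm))
  -- pointwise bound
  have hbound : ∀ x : ℝ, |Z x| ≤ (1 + |ν| + |τ|) * (x ^ 2 + 1) := by
    intro x
    have hn := abs_le.mp (two_mul_abs_le ν x)
    have ht := abs_le.mp (two_mul_abs_le τ x)
    have h0 : 0 ≤ |τ| * (x ^ 2 + 1) := by positivity
    have h0' : 0 ≤ |ν| * (x ^ 2 + 1) := by positivity
    show |(x ^ 2 - 1) * (1 - 2 * (if a < x ∧ x < b then (1 : ℝ) else 0))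
        + 2 * ν * x * (if a < x ∧ x < b then (1 : ℝ) else 0)
        - 2 * τ * x * ((if b < x then (1 : ℝ) else 0) - (if x < a then (1 : ℝ) else 0))|
      ≤ (1 + |ν| + |τ|) * (x ^ 2 + 1)
    split_ifs <;> (rw [abs_le]; constructor) <;>
      linarith [hn.1, hn.2, ht.1, ht.2, h0, h0', sq_nonneg x]
  have hbound2 : ∀ x : ℝ, |Z x ^ 2| ≤ ((1 + |ν| + |τ|) * (x ^ 2 + 1)) ^ 2 := by
    intro x
    rw [abs_pow]
    exact pow_le_pow_left₀ (abs_nonneg _) (hbound x) 2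
  -- integrability
  have hC4 : Integrable (fun x : ℝ => ((1 + |ν| + |τ|) * (x ^ 2 + 1)) * gaussPdf x) := by
    refine (integrable_p4 (1 + |ν| + |τ|) 0 (1 + |ν| + |τ|) 0 0).congr
      (Filter.Eventually.of_forall fun x => ?_)
    ring
  have hC4sq : Integrable (fun x : ℝ => ((1 + |ν| + |τ|) * (x ^ 2 + 1)) ^ 2 * gaussPdf x) := by
    refine (integrable_p4 ((1 + |ν| + |τ|)^2) 0 (2*(1 + |ν| + |τ|)^2) 0 ((1 + |ν| + |τ|)^2)).congr
      (Filter.Eventually.of_forall fun x => ?_)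
    ring
  have hZint : Integrable (fun x => Z x * gaussPdf x) := by
    refine Integrable.mono' hC4 ((hmZ.mul continuous_gaussPdf.measurable).aestronglyMeasurable)
      (Filter.Eventually.of_forall fun x => ?_)
    rw [norm_mul, Real.norm_eq_abs, Real.norm_eq_abs, abs_of_nonneg (gaussPdf_nonneg x)]
    exact mul_le_mul_of_nonneg_right (hbound x) (gaussPdf_nonneg x)
  have hZ2int : Integrable (fun x => Z x ^ 2 * gaussPdf x) := by
    refine Integrable.mono' hC4sq
      (((hmZ.pow_const 2).mul continuous_gaussPdf.measurable).aestronglyMeasurable)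
      (Filter.Eventually.of_forall fun x => ?_)
    rw [norm_mul, Real.norm_eq_abs, Real.norm_eq_abs, abs_of_nonneg (gaussPdf_nonneg x)]
    exact mul_le_mul_of_nonneg_right (hbound2 x) (gaussPdf_nonneg x)
  -- splitting the real line
  have hsplit : ∀ f : ℝ → ℝ, Integrable f →
      ∫ x, f x = (∫ x in Set.Iic a, f x) + (∫ x in Set.Ioo a b, f x) + (∫ x in Set.Ioi b, f x) := by
    intro f hf
    rw [← intervalIntegral.integral_Iic_add_Ioi (b := a) hf.integrableOn hf.integrableOn]
    have hd : Disjoint (Set.Ioc a b) (Set.Ioi b) := by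
      rw [Set.disjoint_left]; intro x hx hx'; exact absurd hx.2 (not_le.mpr hx')
    have h2 := setIntegral_union (f := f) (μ := volume) (s := Set.Ioc a b) (t := Set.Ioi b)
      hd measurableSet_Ioi hf.integrableOn hf.integrableOn
    rw [Set.Ioc_union_Ioi_eq_Ioi hab.le] at h2
    rw [h2, integral_Ioc_eq_integral_Ioo]
    ring
  -- pointwise identification on regions
  have hZl : ∀ x : ℝ, x < a → Z x = quart 0 0 (-1) (-2*τ) 0 x := by
    intro x hx
    have h1 : ¬(a < x ∧ x < b) := fun h => lt_asymm hx h.1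
    have h2 : ¬ b < x := fun h => absurd (h.trans hx) (not_lt.mpr hab.le)
    show (x ^ 2 - 1) * (1 - 2 * (if a < x ∧ x < b then (1 : ℝ) else 0))
        + 2 * ν * x * (if a < x ∧ x < b then (1 : ℝ) else 0)
        - 2 * τ * x * ((if b < x then (1 : ℝ) else 0) - (if x < a then (1 : ℝ) else 0))
      = quart 0 0 (-1) (-2*τ) 0 x
    rw [if_neg h1, if_neg h2, if_pos hx]
    unfold quart cub; ring
  have hZm : ∀ x : ℝ, a < x → x < b → Z x = quart 0 0 1 (-2*ν) 0 x := by
    intro x hx1 hx2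
    have h2 : ¬ b < x := fun h => lt_asymm hx2 h
    have h3 : ¬ x < a := fun h => lt_asymm hx1 h
    show (x ^ 2 - 1) * (1 - 2 * (if a < x ∧ x < b then (1 : ℝ) else 0))
        + 2 * ν * x * (if a < x ∧ x < b then (1 : ℝ) else 0)
        - 2 * τ * x * ((if b < x then (1 : ℝ) else 0) - (if x < a then (1 : ℝ) else 0))
      = quart 0 0 1 (-2*ν) 0 x
    rw [if_pos ⟨hx1, hx2⟩, if_neg h2, if_neg h3]
    unfold quart cub; ring
  have hZr : ∀ x : ℝ, b < x → Z x = quart 0 0 (-1) (2*τ) 0 x := by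
    intro x hx
    have h1 : ¬(a < x ∧ x < b) := fun h => lt_asymm hx h.2
    have h3 : ¬ x < a := fun h => absurd (hx.trans h) (not_lt.mpr hab.le)
    show (x ^ 2 - 1) * (1 - 2 * (if a < x ∧ x < b then (1 : ℝ) else 0))
        + 2 * ν * x * (if a < x ∧ x < b then (1 : ℝ) else 0)
        - 2 * τ * x * ((if b < x then (1 : ℝ) else 0) - (if x < a then (1 : ℝ) else 0))
      = quart 0 0 (-1) (2*τ) 0 x
    rw [if_neg h1, if_pos hx, if_neg h3]
    unfold quart cub; ring
  have hsq_l : ∀ x : ℝ, (quart 0 0 (-1) (-2*τ) 0 x)^2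
      = quart (-1) (-4*τ) (-(1+4*τ^2)) (-4*τ) (2+4*τ^2) x := by
    intro x; unfold quart cub; ring
  have hsq_m : ∀ x : ℝ, (quart 0 0 1 (-2*ν) 0 x)^2
      = quart (-1) (4*ν) (-(1+4*ν^2)) (4*ν) (2+4*ν^2) x := by
    intro x; unfold quart cub; ring
  have hsq_r : ∀ x : ℝ, (quart 0 0 (-1) (2*τ) 0 x)^2
      = quart (-1) (4*τ) (-(1+4*τ^2)) (4*τ) (2+4*τ^2) x := by
    intro x; unfold quart cub; ring
  -- region integral rewrites, first moment
  have R1 : ∫ x in Set.Iic a, Z x * gaussPdf x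
      = ∫ x in Set.Iic a, quart 0 0 (-1) (-2*τ) 0 x * gaussPdf x := by
    rw [integral_Iic_eq_integral_Iio, integral_Iic_eq_integral_Iio]
    exact setIntegral_congr_fun measurableSet_Iio fun x hx => by rw [hZl x hx]
  have R2 : ∫ x in Set.Ioo a b, Z x * gaussPdf x
      = ∫ x in Set.Ioo a b, quart 0 0 1 (-2*ν) 0 x * gaussPdf x :=
    setIntegral_congr_fun measurableSet_Ioo fun x hx => by rw [hZm x hx.1 hx.2]
  have R3 : ∫ x in Set.Ioi b, Z x * gaussPdf x
      = ∫ x in Set.Ioi b, quart 0 0 (-1) (2*τ) 0 x * gaussPdf x :=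
    setIntegral_congr_fun measurableSet_Ioi fun x hx => by rw [hZr x hx]
  have R1' : ∫ x in Set.Iic a, Z x ^ 2 * gaussPdf x
      = ∫ x in Set.Iic a, quart (-1) (-4*τ) (-(1+4*τ^2)) (-4*τ) (2+4*τ^2) x * gaussPdf x := by
    rw [integral_Iic_eq_integral_Iio, integral_Iic_eq_integral_Iio]
    exact setIntegral_congr_fun measurableSet_Iio fun x hx => by rw [hZl x hx, hsq_l x]
  have R2' : ∫ x in Set.Ioo a b, Z x ^ 2 * gaussPdf x
      = ∫ x in Set.Ioo a b, quart (-1) (4*ν) (-(1+4*ν^2)) (4*ν) (2+4*ν^2) x * gaussPdf x :=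
    setIntegral_congr_fun measurableSet_Ioo fun x hx => by rw [hZm x hx.1 hx.2, hsq_m x]
  have R3' : ∫ x in Set.Ioi b, Z x ^ 2 * gaussPdf x
      = ∫ x in Set.Ioi b, quart (-1) (4*τ) (-(1+4*τ^2)) (4*τ) (2+4*τ^2) x * gaussPdf x :=
    setIntegral_congr_fun measurableSet_Ioi fun x hx => by rw [hZr x hx, hsq_r x]
  constructor
  · rw [integral_gaussianReal_eq Z, hsplit _ hZint, R1, R2, R3,
      key_Iic 0 0 (-1) (-2*τ) 0 a, key_Ioo 0 0 1 (-2*ν) 0 a b hab.le,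
      key_Ioi 0 0 (-1) (2*τ) 0 b]
    unfold cub
    rw [ha, hb]
    ring
  · rw [integral_gaussianReal_eq (fun ε => Z ε ^ 2)]
    rw [hsplit _ hZ2int, R1', R2', R3',
      key_Iic (-1) (-4*τ) (-(1+4*τ^2)) (-4*τ) (2+4*τ^2) a,
      key_Ioo (-1) (4*ν) (-(1+4*ν^2)) (4*ν) (2+4*ν^2) a b hab.le,
      key_Ioi (-1) (4*τ) (-(1+4*τ^2)) (4*τ) (2+4*τ^2) b]
    unfold cub
    rw [ha, hb]
    ring
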